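/- Suppose the greedy spanner augmentation algorithm, run with parameter t on an initial metric graph G, adds at least k+1 edges a_1, ..., a_{k+1} (in nondecreasing order of length), where each a_i satisfies d_{G_{i-1}}(a_i) > t · d_M(a_i) and G_i = G_{i-1} ∪ {a_i}. Let t* be the minimum dilation achievable by adding any k edges to G. Then (k+1) · t* > t. -/

import Mathlib

variable {V : Type*}

/-- The length of a walk, given as a list of vertices, under distance function `d`. -/
def walkLen (d : V → V → ℝ) : List V → ℝ
  | [] => 0
  | [_] => 0
  | a :: b :: l => d a b + walkLen d (b :: l)

/-- `l` is a walk from `u` to `v` in the graph with edge relation `E`. -/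
def IsWalk (E : V → V → Prop) (u v : V) (l : List V) : Prop :=
  l.head? = some u ∧ l.getLast? = some v ∧ l.Chain' E

/-- Shortest-path distance between `u` and `v` in the graph with edge relation `E`,
where each edge `(x, y)` has weight `d x y`. -/
noncomputable def graphDist (E : V → V → Prop) (d : V → V → ℝ) (u v : V) : ℝ :=
  sInf {L : ℝ | ∃ l : List V, IsWalk E u v l ∧ walkLen d l = L}

section Aux

open Classical

set_option linter.unusedSectionVars false

variable [MetricSpace V] {E R T : V → V → Prop} {u v w x y : V} {l m : List V}

abbrev symMk {α : Type*} (p : α × α) : Sym2 α := Sym2.mk p.1 p.2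

lemma chain'_cons_aux {R : V → V → Prop} {a b : V} {l : List V} :
    List.Chain' R (a :: b :: l) ↔ R a b ∧ List.Chain' R (b :: l) := List.isChain_cons_cons

lemma chain'_reverse_aux {R : V → V → Prop} {l : List V} :
    List.Chain' R l.reverse ↔ List.Chain' (fun a b => R b a) l := List.isChain_reverse

/-- list of consecutive steps of a list -/
def stepsL : List V → List (V × V)
  | [] => []
  | [_] => []
  | a :: b :: l => (a, b) :: stepsL (b :: l)

lemma stepsL_cons₂ (a b : V) (l : List V) :
    stepsL (a :: b :: l) = (a, b) :: stepsL (b :: l) := rfl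

lemma chain'_iff_stepsL {E : V → V → Prop} :
    ∀ {l : List V}, l.Chain' E ↔ ∀ p ∈ stepsL l, E p.1 p.2
  | [] => by simp [stepsL, List.Chain']
  | [a] => by simp [stepsL, List.Chain']
  | a :: b :: l => by
    rw [chain'_cons_aux, stepsL_cons₂, chain'_iff_stepsL (l := b :: l)]
    constructor
    · rintro ⟨h1, h2⟩ p hp
      rcases List.mem_cons.1 hp with h | h
      · subst h; exact h1
      · exact h2 p h
    · intro h
      exact ⟨h (a, b) List.mem_cons_self, fun p hp => h p (List.mem_cons_of_mem _ hp)⟩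

lemma walkLen_eq_sum (d : V → V → ℝ) :
    ∀ l : List V, walkLen d l = ((stepsL l).map (fun p => d p.1 p.2)).sum
  | [] => by simp [walkLen, stepsL]
  | [a] => by simp [walkLen, stepsL]
  | a :: b :: l => by
    rw [walkLen, stepsL_cons₂, List.map_cons, List.sum_cons, walkLen_eq_sum d (b :: l)]

lemma walkLen_nonneg : ∀ l : List V, 0 ≤ walkLen (dist : V → V → ℝ) l
  | [] => le_refl _
  | [_] => le_refl _
  | a :: b :: l => add_nonneg dist_nonneg (walkLen_nonneg (b :: l))

lemma IsWalk.ne_nil (h : IsWalk E u v l) : l ≠ [] := by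
  rintro rfl; simp [IsWalk] at h

lemma isWalk_singleton (u : V) : IsWalk E u u [u] := by
  refine ⟨rfl, rfl, List.isChain_singleton _⟩

lemma isWalk_pair (h : E u v) : IsWalk E u v [u, v] :=
  ⟨rfl, rfl, List.isChain_pair.2 h⟩

lemma IsWalk.mono (hsub : ∀ x y, E x y → R x y) (h : IsWalk E u v l) : IsWalk R u v l :=
  ⟨h.1, h.2.1, h.2.2.imp (fun {a b} => hsub a b)⟩

lemma dist_le_walkLen : ∀ {l : List V} {u v : V}, IsWalk E u v l →
    dist u v ≤ walkLen (dist : V → V → ℝ) l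
  | [], _, _, h => absurd rfl h.ne_nil
  | [a], u, v, h => by
    obtain ⟨h1, h2, _⟩ := h
    simp only [List.head?, Option.some.injEq] at h1
    simp only [List.getLast?, Option.some.injEq] at h2
    subst h1; subst h2
    simp [walkLen]
  | a :: b :: l, u, v, h => by
    obtain ⟨h1, h2, h3⟩ := h
    simp only [List.head?, Option.some.injEq] at h1
    subst h1
    rw [chain'_cons_aux] at h3
    have hw : IsWalk E b v (b :: l) := by
      refine ⟨rfl, ?_, h3.2⟩
      rw [← h2]
      exact (List.getLast?_cons_cons ..).symm
    have hble := dist_le_walkLen hw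
    have : walkLen (dist : V → V → ℝ) (a :: b :: l) = dist a b + walkLen dist (b :: l) := rfl
    have htri := dist_triangle a b v
    linarith

lemma IsWalk.head_eq (h : IsWalk E u v (x :: l)) : x = u := by
  have := h.1; simp at this; exact this

lemma isWalk_cons_iff {b : V} :
    IsWalk E u v (u :: b :: l) ↔ E u b ∧ IsWalk E b v (b :: l) := by
  constructor
  · rintro ⟨h1, h2, h3⟩
    rw [chain'_cons_aux] at h3
    exact ⟨h3.1, rfl, by rw [← h2]; exact (List.getLast?_cons_cons ..).symm, h3.2⟩
  · rintro ⟨he, h1, h2, h3⟩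
    exact ⟨rfl, by rw [List.getLast?_cons_cons]; exact h2, chain'_cons_aux.2 ⟨he, h3⟩⟩

lemma isWalk_append : ∀ {l : List V} {u v : V}, IsWalk E u v l → ∀ {m : List V} {w : V},
    IsWalk E v w m →
    IsWalk E u w (l ++ m.tail) ∧
      walkLen (dist : V → V → ℝ) (l ++ m.tail) = walkLen dist l + walkLen dist m
  | [], _, _, h, _, _, _ => absurd rfl h.ne_nil
  | [a], u, v, h, m, w, h' => by
    have ha : a = u := h.head_eq
    have hv : a = v := by have := h.2.1; simp [List.getLast?] at this; exact this
    subst ha; subst hv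
    cases m with
    | nil => exact absurd rfl h'.ne_nil
    | cons b m' =>
      have hb : b = a := h'.head_eq
      subst hb
      constructor
      · simpa using h'
      · have : walkLen (dist : V → V → ℝ) [b] = 0 := rfl
        simp [walkLen]
  | a :: c :: l', u, v, h, m, w, h' => by
    have ha : a = u := h.head_eq
    subst ha
    rw [isWalk_cons_iff] at h
    obtain ⟨hE, hw⟩ := h
    obtain ⟨ih1, ih2⟩ := isWalk_append hw h'
    have hcc : (a :: c :: l') ++ m.tail = a :: (c :: (l' ++ m.tail)) := by simp
    constructor
    · rw [hcc]
      refine isWalk_cons_iff.2 ⟨hE, ?_⟩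
      have : (c :: l') ++ m.tail = c :: (l' ++ m.tail) := rfl
      rwa [this] at ih1
    · rw [hcc]
      have e1 : walkLen (dist : V → V → ℝ) (a :: (c :: (l' ++ m.tail)))
          = dist a c + walkLen dist (c :: (l' ++ m.tail)) := rfl
      have e2 : walkLen (dist : V → V → ℝ) (a :: c :: l')
          = dist a c + walkLen dist (c :: l') := rfl
      have e3 : (c :: l') ++ m.tail = c :: (l' ++ m.tail) := rfl
      rw [e1, e2, ← e3, ih2]
      ring

lemma IsWalk.reverse (hsymm : Symmetric E) (h : IsWalk E u v l) : IsWalk E v u l.reverse := by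
  obtain ⟨h1, h2, h3⟩ := h
  refine ⟨?_, ?_, ?_⟩
  · rw [List.head?_reverse]; exact h2
  · rw [List.getLast?_reverse]; exact h1
  · rw [chain'_reverse_aux]
    exact h3.imp (fun {a b} hab => hsymm hab)

/-- connectivity via `E`-walks -/
def Conn (E : V → V → Prop) (u v : V) : Prop := ∃ l, IsWalk E u v l

lemma Conn.refl (u : V) : Conn E u u := ⟨[u], isWalk_singleton u⟩

lemma Conn.symm' (hsymm : Symmetric E) (h : Conn E u v) : Conn E v u := by
  obtain ⟨l, hl⟩ := h; exact ⟨l.reverse, hl.reverse hsymm⟩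

lemma Conn.trans' (h : Conn E u v) (h' : Conn E v w) : Conn E u w := by
  obtain ⟨l, hl⟩ := h; obtain ⟨m, hm⟩ := h'
  exact ⟨l ++ m.tail, (isWalk_append hl hm).1⟩

lemma Conn.of_edge (h : E u v) : Conn E u v := ⟨[u, v], isWalk_pair h⟩

lemma Conn.mono (hsub : ∀ x y, E x y → R x y) (h : Conn E u v) : Conn R u v := by
  obtain ⟨l, hl⟩ := h; exact ⟨l, hl.mono hsub⟩

/-- walk set for graphDist -/
lemma graphDist_le_walkLen (h : IsWalk E u v l) :
    graphDist E dist u v ≤ walkLen (dist : V → V → ℝ) l := by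
  apply csInf_le
  · exact ⟨0, fun L hL => by obtain ⟨l', hl', rfl⟩ := hL; exact walkLen_nonneg l'⟩
  · exact ⟨l, h, rfl⟩

lemma graphDist_nonneg (u v : V) : 0 ≤ graphDist E dist u v := by
  rcases Set.eq_empty_or_nonempty {L : ℝ | ∃ l : List V, IsWalk E u v l ∧ walkLen dist l = L}
    with h | h
  · rw [graphDist, h, Real.sInf_empty]
  · exact le_csInf h (fun L hL => by obtain ⟨l', hl', rfl⟩ := hL; exact walkLen_nonneg l')

lemma exists_walk_lt (hconn : Conn E u v) {B : ℝ} (hB : graphDist E dist u v < B) :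
    ∃ l, IsWalk E u v l ∧ walkLen (dist : V → V → ℝ) l < B := by
  obtain ⟨l₀, hl₀⟩ := hconn
  have hne : {L : ℝ | ∃ l : List V, IsWalk E u v l ∧ walkLen dist l = L}.Nonempty :=
    ⟨walkLen dist l₀, l₀, hl₀, rfl⟩
  obtain ⟨L, hL, hLB⟩ := exists_lt_of_csInf_lt hne hB
  obtain ⟨l, hl, rfl⟩ := hL
  exact ⟨l, hl, hLB⟩

lemma dist_le_graphDist (hconn : Conn E u v) : dist u v ≤ graphDist E dist u v := by
  obtain ⟨l₀, hl₀⟩ := hconn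
  refine le_csInf ⟨walkLen dist l₀, l₀, hl₀, rfl⟩ ?_
  rintro L ⟨l, hl, rfl⟩
  exact dist_le_walkLen hl

/-- internal-edge mass of a walk: total length of steps that are `E`-steps with
both endpoints satisfying `φ` -/
noncomputable def iem (E : V → V → Prop) (φ : V → Prop) : List V → ℝ
  | [] => 0
  | [_] => 0
  | x :: y :: l => (if E x y ∧ φ x ∧ φ y then dist x y else 0) + iem E φ (y :: l)

lemma iem_nonneg (φ : V → Prop) : ∀ l : List V, 0 ≤ iem E φ l
  | [] => le_refl _
  | [_] => le_refl _
  | x :: y :: l => by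
    have := iem_nonneg φ (y :: l)
    have h0 : (0:ℝ) ≤ (if E x y ∧ φ x ∧ φ y then dist x y else 0) := by
      split <;> [exact dist_nonneg; exact le_refl _]
    have e : iem E φ (x :: y :: l)
        = (if E x y ∧ φ x ∧ φ y then dist x y else 0) + iem E φ (y :: l) := rfl
    rw [e]; linarith

lemma iem_le_walkLen (φ : V → Prop) : ∀ l : List V, iem E φ l ≤ walkLen dist l
  | [] => le_refl _
  | [_] => le_refl _
  | x :: y :: l => by
    have := iem_le_walkLen φ (y :: l)
    have h0 : (if E x y ∧ φ x ∧ φ y then dist x y else 0) ≤ dist x y := by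
      split <;> [exact le_refl _; exact dist_nonneg]
    have e : iem E φ (x :: y :: l)
        = (if E x y ∧ φ x ∧ φ y then dist x y else 0) + iem E φ (y :: l) := rfl
    have e2 : walkLen (dist : V → V → ℝ) (x :: y :: l) = dist x y + walkLen dist (y :: l) := rfl
    rw [e, e2]; linarith

section Pcore

variable {H R : V → V → Prop} {u₀ : V} {D t acc εf : ℝ}

lemma flushLemma (hER : ∀ x y, E x y → R x y) (hsymm : Symmetric E)
    (hminR : ∀ p q : V, p ≠ q → dist p q < D → graphDist R dist p q ≤ t * dist p q)
    (ht : 0 < t) (hεf : 0 < εf) {x₀ z : V}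
    (h1 : Conn E u₀ x₀) (h2 : Conn E u₀ z) (hacc : dist x₀ z ≤ acc) (hacc0 : 0 ≤ acc) :
    (∃ m, IsWalk R x₀ z m ∧ walkLen (dist : V → V → ℝ) m ≤ t * acc + εf) ∨ D ≤ acc := by
  by_cases hxz : x₀ = z
  · subst hxz
    refine Or.inl ⟨[x₀], isWalk_singleton x₀, ?_⟩
    have : walkLen (dist : V → V → ℝ) [x₀] = 0 := rfl
    rw [this]
    nlinarith
  · by_cases hD : dist x₀ z < D
    · have hconn : Conn R x₀ z :=
        (((h1.symm' hsymm).trans' h2).mono hER)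
      have hgd : graphDist R dist x₀ z < t * acc + εf := by
        have := hminR x₀ z hxz hD
        have h2' : t * dist x₀ z ≤ t * acc := by
          exact mul_le_mul_of_nonneg_left hacc (le_of_lt ht)
        linarith
      obtain ⟨m, hm, hmlen⟩ := exists_walk_lt hconn hgd
      exact Or.inl ⟨m, hm, le_of_lt hmlen⟩
    · right
      push_neg at hD
      linarith

lemma Qlemma (hER : ∀ x y, E x y → R x y) (hsymm : Symmetric E)
    (hminR : ∀ p q : V, p ≠ q → dist p q < D → graphDist R dist p q ≤ t * dist p q)
    (ht : 0 < t) (hεf : 0 < εf) {y : V} (hy : Conn E u₀ y) :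
    ∀ {l : List V} {z x₀ : V} {acc : ℝ}, IsWalk H z y l → Conn E u₀ x₀ →
      dist x₀ z ≤ acc → 0 ≤ acc →
    (∃ m, IsWalk R x₀ y m ∧ walkLen (dist : V → V → ℝ) m ≤
        t * acc + iem E (Conn E u₀) l
          + t * (walkLen dist l - iem E (Conn E u₀) l) + l.length * εf) ∨
      D ≤ acc + (walkLen (dist : V → V → ℝ) l - iem E (Conn E u₀) l)
  | [], _, _, _, h, _, _, _ => absurd rfl h.ne_nil
  | [z'], z, x₀, acc, h, hx₀, hacc, hacc0 => by
    have hz : z' = z := h.head_eq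
    subst hz
    have hzy : z' = y := by have := h.2.1; simp [List.getLast?] at this; exact this
    subst hzy
    have hiem : iem E (Conn E u₀) [z'] = 0 := rfl
    have hwl : walkLen (dist : V → V → ℝ) [z'] = 0 := rfl
    rcases flushLemma hER hsymm hminR ht hεf hx₀ hy hacc hacc0 with ⟨m, hm, hlen⟩ | hD
    · refine Or.inl ⟨m, hm, ?_⟩
      rw [hiem, hwl]
      simp only [List.length_singleton, Nat.cast_one, one_mul]
      linarith
    · right; rw [hiem, hwl]; linarith
  | z' :: z₂ :: rest, z, x₀, acc, h, hx₀, hacc, hacc0 => by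
    have hz : z' = z := h.head_eq
    subst hz
    rw [isWalk_cons_iff] at h
    obtain ⟨hHz, hw⟩ := h
    have hiem : iem E (Conn E u₀) (z' :: z₂ :: rest)
        = (if E z' z₂ ∧ Conn E u₀ z' ∧ Conn E u₀ z₂ then dist z' z₂ else 0)
          + iem E (Conn E u₀) (z₂ :: rest) := rfl
    have hwl : walkLen (dist : V → V → ℝ) (z' :: z₂ :: rest)
        = dist z' z₂ + walkLen dist (z₂ :: rest) := rfl
    have hlen : ((z' :: z₂ :: rest).length : ℝ) = ((z₂ :: rest).length : ℝ) + 1 := by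
      simp [List.length_cons]
    by_cases hint : E z' z₂ ∧ Conn E u₀ z' ∧ Conn E u₀ z₂
    · -- internal step: flush the pending excursion, keep the step
      rcases flushLemma hER hsymm hminR ht hεf hx₀ hint.2.1 hacc hacc0 with ⟨m₀, hm₀, hm₀len⟩ | hD
      · rcases Qlemma hER hsymm hminR ht hεf hy hw hint.2.2 (by simp) (le_refl 0)
          with ⟨m₁, hm₁, hm₁len⟩ | hD
        · -- compose m₀ ++ step ++ m₁
          have hstep : IsWalk R z' z₂ [z', z₂] := isWalk_pair (hER _ _ hint.1)
          obtain ⟨hw1, hl1⟩ := isWalk_append hm₀ hstep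
          obtain ⟨hw2, hl2⟩ := isWalk_append hw1 hm₁
          refine Or.inl ⟨_, hw2, ?_⟩
          rw [hl2, hl1]
          have hstepLen : walkLen (dist : V → V → ℝ) [z', z₂] = dist z' z₂ + 0 := rfl
          rw [hiem, hwl, if_pos hint, hlen]
          rw [hstepLen] at *
          have hiw := iem_le_walkLen (E := E) (Conn E u₀) (z₂ :: rest)
          nlinarith [hεf.le]
        · right
          rw [hiem, hwl, if_pos hint]
          have h0 : 0 + (walkLen (dist : V → V → ℝ) (z₂ :: rest)
              - iem E (Conn E u₀) (z₂ :: rest)) ≤ acc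
              + (dist z' z₂ + walkLen dist (z₂ :: rest)
                - (dist z' z₂ + iem E (Conn E u₀) (z₂ :: rest))) := by
            linarith
          linarith
      · right
        have hiw := iem_le_walkLen (E := E) (Conn E u₀) (z₂ :: rest)
        rw [hiem, hwl, if_pos hint]
        have h0 : (0:ℝ) ≤ dist z' z₂ := dist_nonneg
        linarith
    · -- excursion step: absorb it into acc
      have htri : dist x₀ z₂ ≤ acc + dist z' z₂ :=
        le_trans (dist_triangle x₀ z' z₂) (by linarith)
      have hacc0' : 0 ≤ acc + dist z' z₂ := by have := dist_nonneg (x := z') (y := z₂); linarith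
      rcases Qlemma hER hsymm hminR ht hεf hy hw hx₀ htri hacc0'
        with ⟨m₁, hm₁, hm₁len⟩ | hD
      · refine Or.inl ⟨m₁, hm₁, ?_⟩
        rw [hiem, hwl, if_neg hint, hlen]
        nlinarith [hεf.le]
      · right
        rw [hiem, hwl, if_neg hint]
        linarith
end Pcore

/-- mod-2 incidence of a step at a vertex -/
noncomputable def incZ (p : V × V) (w : V) : ZMod 2 :=
  (if p.1 = w then 1 else 0) + (if p.2 = w then 1 else 0)

/-- mod-2 degree of a vertex in a multiset of steps -/
noncomputable def degZ (M : Multiset (V × V)) (w : V) : ZMod 2 :=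
  (M.map (fun p => incZ p w)).sum

lemma zmod2_add_self : ∀ x : ZMod 2, x + x = 0 := by decide

lemma degZ_add (A B : Multiset (V × V)) (w : V) :
    degZ (A + B) w = degZ A w + degZ B w := by
  simp [degZ]

lemma degZ_cons (p : V × V) (M : Multiset (V × V)) (w : V) :
    degZ (p ::ₘ M) w = incZ p w + degZ M w := by
  simp [degZ]

lemma degZ_erase {M : Multiset (V × V)} {p : V × V} (hp : p ∈ M) (w : V) :
    degZ (M.erase p) w = degZ M w + incZ p w := by
  have h1 : degZ M w = incZ p w + degZ (M.erase p) w := by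
    conv_lhs => rw [← Multiset.cons_erase hp]
    rw [degZ_cons]
  rw [h1, show incZ p w + degZ (M.erase p) w + incZ p w
      = degZ (M.erase p) w + (incZ p w + incZ p w) by ring,
    zmod2_add_self, add_zero]

lemma exists_incident {M : Multiset (V × V)} {w : V} (h : degZ M w ≠ 0) :
    ∃ p ∈ M, p.1 = w ∨ p.2 = w := by
  by_contra hc
  push_neg at hc
  apply h
  apply Multiset.sum_eq_zero
  intro x hx
  obtain ⟨p, hpM, rfl⟩ := Multiset.mem_map.1 hx
  have := hc p hpM
  simp [incZ, this.1, this.2]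

/-- multiset of steps of a list -/
def stepsM (l : List V) : Multiset (V × V) := (stepsL l : Multiset (V × V))

lemma stepsM_cons₂ (a b : V) (l : List V) :
    stepsM (a :: b :: l) = (a, b) ::ₘ stepsM (b :: l) := rfl

/-- Euler-style extraction: if the mod-2 degrees of `M` are those of a `u`-`v` path,
then there is a walk from `u` to `v` using steps of `M` (in either orientation). -/
lemma euler_walk : ∀ (M : Multiset (V × V)) (u v : V), u ≠ v →
    (∀ w, degZ M w = (if u = w then 1 else 0) + (if v = w then 1 else 0)) →
    ∃ l : List V, l.head? = some u ∧ l.getLast? = some v ∧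
      (stepsM l).map symMk ≤ M.map symMk := by
  intro M
  induction M using Multiset.strongInductionOn with
  | _ M ih =>
  intro u v hne h
  have hdegu : degZ M u ≠ 0 := by
    rw [h u]
    simp [hne.symm, Ne.symm hne]
  obtain ⟨p, hpM, hpu⟩ := exists_incident hdegu
  -- normalize: get x with symMk p = s(u, x) and incZ p w = [u=w]+[x=w]
  obtain ⟨x, hmk, hinc⟩ : ∃ x, symMk p = s(u, x) ∧
      ∀ w, incZ p w = (if u = w then 1 else 0) + (if x = w then 1 else 0) := by
    obtain ⟨p1, p2⟩ := p
    rcases hpu with h1 | h2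
    · subst h1
      exact ⟨p2, rfl, fun w => by simp [incZ]⟩
    · subst h2
      refine ⟨p1, Sym2.eq_swap, fun w => by simp [incZ, add_comm]⟩
  by_cases hxv : x = v
  · subst hxv
    refine ⟨[u, x], rfl, rfl, ?_⟩
    have e : (stepsM [u, x]).map symMk = {s(u, x)} := rfl
    rw [e, Multiset.singleton_le]
    exact Multiset.mem_map.2 ⟨p, hpM, hmk⟩
  · have hM' : M.erase p < M := Multiset.erase_lt.2 hpM
    by_cases hxu : x = u
    · -- self-loop; discard it
      have hinc0 : ∀ w, incZ p w = 0 := by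
        intro w; rw [hinc w, hxu, zmod2_add_self]
      have h' : ∀ w, degZ (M.erase p) w
          = (if u = w then 1 else 0) + (if v = w then 1 else 0) := by
        intro w
        rw [degZ_erase hpM, hinc0, add_zero, h]
      obtain ⟨l, hl1, hl2, hl3⟩ := ih _ hM' u v hne h'
      exact ⟨l, hl1, hl2, le_trans hl3 (Multiset.map_le_map (Multiset.erase_le _ _))⟩
    · -- proper new vertex x ∉ {u, v}
      have h' : ∀ w, degZ (M.erase p) w
          = (if x = w then 1 else 0) + (if v = w then 1 else 0) := by
        intro w
        rw [degZ_erase hpM, hinc, h]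
        by_cases hu : u = w <;> by_cases hv : v = w <;> by_cases hx : x = w <;>
          simp [hu, hv, hx] <;>
          first
            | rfl
            | (exfalso; first
                | exact hne (hu.trans hv.symm)
                | exact hxu (hx.trans hu.symm)
                | exact hxv (hx.trans hv.symm))
      obtain ⟨l, hl1, hl2, hl3⟩ := ih _ hM' x v hxv h'
      cases l with
      | nil => simp at hl1
      | cons c l' =>
        have hc : c = x := by simpa using hl1
        subst hc
        refine ⟨u :: c :: l', rfl, ?_, ?_⟩
        · rw [← hl2]
          exact List.getLast?_cons_cons ..
        · have e : (stepsM (u :: c :: l')).map symMk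
              = s(u, c) ::ₘ (stepsM (c :: l')).map symMk := by
            rw [stepsM_cons₂]; simp
          rw [e]
          have eM : M.map symMk = symMk p ::ₘ (M.erase p).map symMk := by
            conv_lhs => rw [← Multiset.cons_erase hpM]
            simp
          rw [eM, hmk]
          exact Multiset.cons_le_cons _ hl3

lemma degZ_stepsM : ∀ {l : List V} {u v : V}, l.head? = some u → l.getLast? = some v →
    ∀ w, degZ (stepsM l) w = (if u = w then 1 else 0) + (if v = w then 1 else 0)
  | [], _, _, h, _, _ => by simp at h
  | [a], u, v, h1, h2, w => by
    simp only [List.head?, Option.some.injEq] at h1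
    simp only [List.getLast?_singleton, Option.some.injEq] at h2
    subst h1; subst h2
    have e : degZ (stepsM [a]) w = 0 := rfl
    rw [e]
    exact (zmod2_add_self _).symm
  | a :: b :: l, u, v, h1, h2, w => by
    simp only [List.head?, Option.some.injEq] at h1
    subst h1
    rw [List.getLast?_cons_cons] at h2
    have ih := degZ_stepsM (l := b :: l) rfl h2 w
    rw [stepsM_cons₂, degZ_cons, ih]
    have e : incZ (a, b) w = (if a = w then 1 else 0) + (if b = w then 1 else 0) := rfl
    rw [e, show ((if a = w then (1:ZMod 2) else 0) + (if b = w then 1 else 0))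
        + ((if b = w then 1 else 0) + (if v = w then 1 else 0))
      = ((if a = w then 1 else 0) + (if v = w then 1 else 0))
        + ((if b = w then 1 else 0) + (if b = w then 1 else 0)) by ring,
      zmod2_add_self, add_zero]

/-- symmetric mod-2 incidence on unordered pairs -/
noncomputable def incS (w : V) : Sym2 V → ZMod 2 :=
  Sym2.lift ⟨fun a b => (if a = w then 1 else 0) + (if b = w then 1 else 0),
    fun a b => add_comm _ _⟩

lemma incZ_eq_incS (p : V × V) (w : V) : incZ p w = incS w (symMk p) := by
  obtain ⟨p1, p2⟩ := p
  simp [incZ, incS]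

lemma degZ_eq_zero_of_even_counts {T : Multiset (V × V)}
    (h : ∀ e : Sym2 V, (((T.map symMk).count e : ℕ) : ZMod 2) = 0) (w : V) :
    degZ T w = 0 := by
  have e0 : (T.map (fun p => incZ p w)) = (T.map (fun p => incS w (symMk p))) :=
    Multiset.map_congr rfl (fun p _ => incZ_eq_incS p w)
  have e1 : degZ T w = ((T.map symMk).map (incS w)).sum := by
    rw [degZ, e0, Multiset.map_map]
    rfl
  rw [e1, Finset.sum_multiset_map_count]
  apply Finset.sum_eq_zero
  intro e _
  rw [← Nat.cast_smul_eq_nsmul (ZMod 2), h e, zero_smul]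

lemma sum_map_le_of_le {α : Type*} {T T' : Multiset α} (f : α → ℝ)
    (hle : T ≤ T') (hf : ∀ x ∈ T', 0 ≤ f x) : (T.map f).sum ≤ (T'.map f).sum := by
  obtain ⟨u, rfl⟩ := Multiset.le_iff_exists_add.1 hle
  rw [Multiset.map_add, Multiset.sum_add]
  have : 0 ≤ (u.map f).sum := by
    apply Multiset.sum_nonneg
    intro x hx
    obtain ⟨y, hy, rfl⟩ := Multiset.mem_map.1 hx
    exact hf y (Multiset.mem_add.2 (Or.inr hy))
  linarith

lemma le_filter_map_of {T M : Multiset (V × V)} (P : Sym2 V → Prop)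
    (hle : T.map symMk ≤ M.map symMk) (hP : ∀ p ∈ T, P (symMk p)) :
    T.map symMk ≤ (M.filter (fun p => P (symMk p))).map symMk := by
  rw [Multiset.le_iff_count]
  intro e
  by_cases hTe : e ∈ T.map symMk
  · obtain ⟨p, hpT, rfl⟩ := Multiset.mem_map.1 hTe
    have hPe : P (symMk p) := hP p hpT
    have : ((M.filter (fun q => P (symMk q))).map symMk).count (symMk p)
        = (M.map symMk).count (symMk p) := by
      rw [Multiset.count_map, Multiset.count_map]
      congr 1
      rw [Multiset.filter_filter]
      apply Multiset.filter_congr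
      intro q _
      constructor
      · rintro ⟨h1, _⟩; exact h1
      · intro h1; exact ⟨h1, h1 ▸ hPe⟩
    rw [this]
    exact (Multiset.le_iff_count.1 hle) _
  · rw [Multiset.count_eq_zero_of_notMem hTe]
    exact Nat.zero_le _

lemma walkLen_eq_sym2_sum (l : List V) :
    walkLen (dist : V → V → ℝ) l
      = (((stepsM l).map symMk).map (Sym2.lift ⟨(dist : V → V → ℝ), dist_comm⟩)).sum := by
  rw [Multiset.map_map, walkLen_eq_sum]
  have e0 : ((stepsM l).map ((Sym2.lift ⟨(dist : V → V → ℝ), dist_comm⟩) ∘ symMk))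
      = ((stepsM l).map (fun p => dist p.1 p.2)) :=
    Multiset.map_congr rfl (fun p _ => by obtain ⟨p1, p2⟩ := p; simp)
  rw [e0]
  simp [stepsM, Multiset.map_coe, Multiset.sum_coe]

lemma zmod2_ne_zero : ∀ x : ZMod 2, x ≠ 0 → x = 1 := by decide

lemma degZ_sum {ι : Type*} (F : Finset ι) (f : ι → Multiset (V × V)) (w : V) :
    degZ (∑ i ∈ F, f i) w = ∑ i ∈ F, degZ (f i) w := by
  induction F using Finset.cons_induction with
  | empty => rfl
  | cons i F hi ih => rw [Finset.sum_cons, Finset.sum_cons, degZ_add, ih]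

lemma map_finsetSum' {ι β γ : Type*} (F : Finset ι) (f : ι → Multiset β) (g : β → γ) :
    (∑ i ∈ F, f i).map g = ∑ i ∈ F, (f i).map g := by
  induction F using Finset.cons_induction with
  | empty => rfl
  | cons i F hi ih => rw [Finset.sum_cons, Finset.sum_cons, Multiset.map_add, ih]

lemma filter_finsetSum {ι β : Type*} (F : Finset ι) (f : ι → Multiset β) (p : β → Prop)
    [DecidablePred p] :
    (∑ i ∈ F, f i).filter p = ∑ i ∈ F, (f i).filter p := by
  induction F using Finset.cons_induction with
  | empty => rfl
  | cons i F hi ih => rw [Finset.sum_cons, Finset.sum_cons, Multiset.filter_add, ih]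

lemma sum_finsetSum {ι β : Type*} [AddCommMonoid β] (F : Finset ι) (f : ι → Multiset β) :
    (∑ i ∈ F, f i).sum = ∑ i ∈ F, (f i).sum := by
  induction F using Finset.cons_induction with
  | empty => rfl
  | cons i F hi ih => rw [Finset.sum_cons, Finset.sum_cons, Multiset.sum_add, ih]

lemma iem_eq_filter_sum (φ : V → Prop) : ∀ l : List V,
    iem E φ l = (((stepsM l).filter (fun p => E p.1 p.2 ∧ φ p.1 ∧ φ p.2)).map
      (fun p => dist p.1 p.2)).sum
  | [] => by simp [iem, stepsM, stepsL]
  | [a] => by simp [iem, stepsM, stepsL]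
  | a :: b :: l => by
    have e : iem E φ (a :: b :: l)
        = (if E a b ∧ φ a ∧ φ b then dist a b else 0) + iem E φ (b :: l) := rfl
    rw [e, iem_eq_filter_sum φ (b :: l), stepsM_cons₂, Multiset.filter_cons]
    split
    · rw [Multiset.map_add, Multiset.sum_add]
      simp
    · simp

lemma conn_all_steps : ∀ {l : List V} {u : V}, l.head? = some u →
    (∀ p ∈ stepsL l, Conn E p.1 p.2) →
    ∀ p ∈ stepsL l, Conn E u p.1 ∧ Conn E u p.2
  | [], _, _, _ => by simp [stepsL]
  | [a], _, _, _ => by simp [stepsL]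
  | a :: b :: l, u, h1, hconn => by
    simp only [List.head?, Option.some.injEq] at h1
    subst h1
    intro p hp
    have hab : Conn E a b := hconn (a, b) (by rw [stepsL_cons₂]; exact List.mem_cons_self)
    rcases List.mem_cons.1 (by rwa [stepsL_cons₂] at hp) with rfl | hp'
    · exact ⟨Conn.refl a, hab⟩
    · have ih := conn_all_steps (l := b :: l) rfl
        (fun q hq => hconn q (by rw [stepsL_cons₂]; exact List.mem_cons_of_mem _ hq)) p hp'
      exact ⟨hab.trans' ih.1, hab.trans' ih.2⟩

lemma sym2_dist_nonneg : ∀ e : Sym2 V, 0 ≤ (Sym2.lift ⟨(dist : V → V → ℝ), dist_comm⟩) e := by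
  intro e
  induction e using Sym2.ind with
  | _ x y => simp [dist_nonneg]

lemma conn_of_steps : ∀ {l : List V} {x y : V}, l.head? = some x → l.getLast? = some y →
    (∀ p ∈ stepsL l, Conn E p.1 p.2) → Conn E x y
  | [], _, _, h, _, _ => by simp at h
  | [a], x, y, h1, h2, _ => by
    simp only [List.head?, Option.some.injEq] at h1
    simp only [List.getLast?_singleton, Option.some.injEq] at h2
    subst h1; subst h2; exact Conn.refl _
  | a :: b :: l, x, y, h1, h2, h3 => by
    simp only [List.head?, Option.some.injEq] at h1
    subst h1
    rw [List.getLast?_cons_cons] at h2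
    have hab : Conn E a b := h3 (a, b) (by rw [stepsL_cons₂]; exact List.mem_cons_self)
    exact hab.trans' (conn_of_steps (l := b :: l) rfl h2
      (fun q hq => h3 q (by rw [stepsL_cons₂]; exact List.mem_cons_of_mem _ hq)))

lemma conn_of_graphDist_pos {E' : V → V → Prop} {u v : V}
    (h : 0 < graphDist E' dist u v) : Conn E' u v := by
  by_contra hno
  have hempty : {L : ℝ | ∃ l, IsWalk E' u v l ∧ walkLen dist l = L} = ∅ := by
    ext L
    simp only [Set.mem_setOf_eq, Set.mem_empty_iff_false, iff_false]
    rintro ⟨l, hl, _⟩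
    exact hno ⟨l, hl⟩
  rw [graphDist, hempty, Real.sInf_empty] at h
  exact lt_irrefl 0 h

end Aux

set_option maxHeartbeats 2000000 in
/-- If the greedy spanner augmentation algorithm with parameter `t` on an initial metric graph
`G = (V, E)` adds at least `k + 1` edges `a 0, …, a k` (in nondecreasing order of length,
each greedy: shortest edge whose current shortest-path distance exceeds `t` times its metric
length), then `t < (k + 1) · t*`, where `t*` is the dilation of `G ∪ S` for any set `S` of
`k` added edges (in particular for the optimal one). -/
theorem stmt6 {V : Type*} [MetricSpace V] [Fintype V]
    (E : V → V → Prop) (hEsymm : Symmetric E) (t : ℝ) (ht : 1 < t) (k : ℕ)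
    (a : Fin (k + 1) → V × V) (hane : ∀ i, (a i).1 ≠ (a i).2)
    (Ei : ℕ → (V → V → Prop)) (hE0 : Ei 0 = E)
    (hEsucc : ∀ i : Fin (k + 1), Ei ((i : ℕ) + 1) =
      fun x y => Ei (i : ℕ) x y ∨ (x, y) = a i ∨ (y, x) = a i)
    (hgreedy : ∀ i : Fin (k + 1),
      t * dist (a i).1 (a i).2 < graphDist (Ei (i : ℕ)) dist (a i).1 (a i).2)
    (hmin : ∀ i : Fin (k + 1), ∀ x y : V, x ≠ y → dist x y < dist (a i).1 (a i).2 →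
      graphDist (Ei (i : ℕ)) dist x y ≤ t * dist x y)
    (hmono : ∀ i j : Fin (k + 1), i ≤ j → dist (a i).1 (a i).2 ≤ dist (a j).1 (a j).2)
    (S : Finset (V × V)) (hS : S.card = k) (tstar : ℝ)
    (hdil : ∀ x y : V, x ≠ y →
      graphDist (fun p q => E p q ∨ (p, q) ∈ S ∨ (q, p) ∈ S) dist x y ≤ tstar * dist x y) :
    t < ((k : ℝ) + 1) * tstar := by
  classical
  by_contra hcon
  push_neg at hcon
  -- hcon : ((k:ℝ) + 1) * tstar ≤ t
  have ht0 : (0:ℝ) < t := by linarith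
  have ht1 : (0:ℝ) < t - 1 := by linarith
  have hdpos : ∀ i : Fin (k+1), 0 < dist (a i).1 (a i).2 := fun i => dist_pos.2 (hane i)
  set H : V → V → Prop := fun p q => E p q ∨ (p, q) ∈ S ∨ (q, p) ∈ S with hHdef
  have hEH : ∀ x y, E x y → H x y := fun x y h => Or.inl h
  have hEstep : ∀ i : ℕ, i < k + 1 → ∀ x y, Ei i x y → Ei (i+1) x y := by
    intro i hi x y h
    have e := hEsucc ⟨i, hi⟩
    exact e ▸ Or.inl h
  have hEmono : ∀ m n : ℕ, m ≤ n → n ≤ k + 1 → ∀ x y, Ei m x y → Ei n x y := by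
    intro m n hmn
    induction hmn with
    | refl => exact fun _ x y h => h
    | @step n hmn ih =>
      intro hn x y h
      exact hEstep n (by omega) x y (ih (by omega) x y h)
  have hEEi : ∀ n : ℕ, n ≤ k + 1 → ∀ x y, E x y → Ei n x y := by
    intro n hn x y h
    exact hEmono 0 n (Nat.zero_le _) hn x y (by rwa [hE0])
  -- pairs of greedy edges are Ei-connected
  have hconnEi : ∀ i : Fin (k+1), Conn (Ei (i:ℕ)) (a i).1 (a i).2 := by
    intro i
    apply conn_of_graphDist_pos
    have := hgreedy i
    nlinarith [hdpos i]
  -- Ei-connectivity implies E-connectivity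
  have hECON : ∀ n : ℕ, n ≤ k + 1 → ∀ x y : V, Conn (Ei n) x y → Conn E x y := by
    intro n
    induction n with
    | zero => intro _ x y h; rwa [hE0] at h
    | succ n ih =>
      intro hn x y h
      have hn' : n ≤ k + 1 := by omega
      have hnlt : n < k + 1 := by omega
      have hpair : Conn E (a ⟨n, hnlt⟩).1 (a ⟨n, hnlt⟩).2 := ih hn' _ _ (hconnEi ⟨n, hnlt⟩)
      obtain ⟨l, hl⟩ := h
      refine conn_of_steps hl.1 hl.2.1 ?_
      intro p hp
      have hrel : Ei (n+1) p.1 p.2 := (chain'_iff_stepsL.1 hl.2.2) p hp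
      have e := hEsucc ⟨n, hnlt⟩
      rw [show ((⟨n, hnlt⟩ : Fin (k+1)) : ℕ) = n from rfl] at e
      rw [e] at hrel
      rcases hrel with h' | h' | h'
      · exact ih hn' _ _ (Conn.of_edge h')
      · have h1 : p.1 = (a ⟨n,hnlt⟩).1 := congrArg Prod.fst h'
        have h2 : p.2 = (a ⟨n,hnlt⟩).2 := congrArg Prod.snd h'
        rw [h1, h2]; exact hpair
      · have h1 : p.2 = (a ⟨n,hnlt⟩).1 := congrArg Prod.fst h'
        have h2 : p.1 = (a ⟨n,hnlt⟩).2 := congrArg Prod.snd h'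
        rw [h1, h2]; exact hpair.symm' hEsymm
  have hconn : ∀ i : Fin (k+1), Conn E (a i).1 (a i).2 := by
    intro i
    exact hECON (i:ℕ) (by omega) _ _ (hconnEi i)
  -- tstar ≥ 1
  have hτ1 : 1 ≤ tstar := by
    have h1 : dist (a 0).1 (a 0).2 ≤ graphDist H dist (a 0).1 (a 0).2 :=
      dist_le_graphDist ((hconn 0).mono hEH)
    have h2 := hdil (a 0).1 (a 0).2 (hane 0)
    have h3 := hdpos 0
    nlinarith
  -- dispose of the case k = 0
  rcases Nat.eq_zero_or_pos k with hk0 | hkpos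
  · subst hk0
    have hSempty : S = ∅ := Finset.card_eq_zero.1 hS
    have hHE : H = E := by
      funext p q
      simp [hHdef, hSempty, Finset.notMem_empty]
    have h1 := hgreedy 0
    have h2 := hdil (a 0).1 (a 0).2 (hane 0)
    rw [hHE] at h2
    rw [show ((0 : Fin 1):ℕ) = 0 from rfl, hE0] at h1
    have h3 := hdpos 0
    have : t < tstar := by nlinarith
    have : ((0:ℕ):ℝ) + 1 = 1 := by norm_num
    nlinarith [hcon]
  -- main case: k ≥ 1
  have hk1 : (1:ℝ) ≤ (k:ℝ) := by exact_mod_cast hkpos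
  have ht2 : (2:ℝ) ≤ t := by nlinarith
  set τ := tstar with hτdef
  set c : ℝ := (t - τ) / (t - 1) with hcdef
  have hc1 : c ≤ 1 := by
    rw [hcdef, div_le_one ht1]
    linarith
  have hτc : 0 ≤ τ - c := by linarith
  have hmarg : 0 < ((k:ℝ)+1) * c - k := by
    have he : ((k:ℝ)+1) * c - k = (t - ((k:ℝ)+1)*τ + k) / (t-1) := by
      rw [hcdef, eq_div_iff ht1.ne', sub_mul, mul_assoc, div_mul_cancel₀ _ ht1.ne']
      ring
    rw [he]
    apply div_pos _ ht1
    nlinarith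
  set ε : ℝ := (((k:ℝ)+1) * c - k) * dist (a 0).1 (a 0).2 / (6*((k:ℝ)+1)) with hεdef
  have hεpos : 0 < ε := by
    apply div_pos (mul_pos hmarg (hdpos 0))
    positivity
  -- choose the near-shortest walks
  have hWex : ∀ i : Fin (k+1), ∃ l, IsWalk H (a i).1 (a i).2 l ∧
      walkLen (dist : V → V → ℝ) l ≤ τ * dist (a i).1 (a i).2 + ε := by
    intro i
    have h2 := hdil (a i).1 (a i).2 (hane i)
    obtain ⟨l, hl, hlen⟩ := exists_walk_lt ((hconn i).mono hEH) (show graphDist H dist (a i).1 (a i).2 < τ * dist (a i).1 (a i).2 + ε by linarith)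
    exact ⟨l, hl, hlen.le⟩
  choose W hW1 hW2 using hWex
  -- (t-1) * c = t - τ
  have hcmul : (t-1) * c = t - τ := by
    rw [hcdef]
    field_simp
  -- per-walk internal-mass lower bound (σ̃ ≥ c d_i - 2ε)
  have hP8 : ∀ i : Fin (k+1),
      c * dist (a i).1 (a i).2 - 2*ε ≤
        walkLen (dist : V → V → ℝ) (W i) - iem E (Conn E (a i).1) (W i) := by
    intro i
    set di := dist (a i).1 (a i).2 with hdi
    set L : ℝ := ((W i).length : ℝ) with hL
    have hL0 : 0 ≤ L := by rw [hL]; positivity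
    set εf : ℝ := ε * (t-1) / (L + 1) with hεf
    have hεfpos : 0 < εf := by
      apply div_pos (mul_pos hεpos ht1)
      linarith
    have hQ := Qlemma (E := E) (R := Ei (i:ℕ)) (H := H) (u₀ := (a i).1) (D := di)
      (hEEi (i:ℕ) (by omega)) hEsymm
      (fun p q hpq hlt => hmin i p q hpq hlt) ht0 hεfpos (hconn i)
      (l := W i) (z := (a i).1) (x₀ := (a i).1) (acc := 0)
      (hW1 i) (Conn.refl _) (by simp) (le_refl 0)
    have hiemle := iem_le_walkLen (E := E) (Conn E (a i).1) (W i)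
    rcases hQ with ⟨m, hm, hmlen⟩ | hbig
    · have hgd : t * di < walkLen (dist : V → V → ℝ) m :=
        lt_of_lt_of_le (hgreedy i) (graphDist_le_walkLen hm)
      have hlenbd : L * εf ≤ ε * (t-1) := by
        rw [hεf, mul_div_assoc']
        rw [div_le_iff₀ (by linarith : (0:ℝ) < L + 1)]
        nlinarith [mul_nonneg hεpos.le ht1.le]
      have hWlen := hW2 i
      rw [← hdi] at hWlen
      -- t di < iem + t (len - iem) + L εf ; len ≤ τ di + ε
      nlinarith [hmlen, hgd, hWlen, hεpos, ht2, hcmul, hdpos i]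
    · -- σ̃ ≥ di ≥ c di - 2ε
      have := hdpos i
      rw [← hdi] at this
      nlinarith [hbig, hc1, hεpos]
  -- GF(2) dependency among the crossing parity vectors
  haveI : Fact (Nat.Prime 2) := ⟨Nat.prime_two⟩
  set U : Finset (Sym2 V) := S.image symMk with hUdef
  have hUcard : U.card ≤ k := le_trans (Finset.card_image_le) (le_of_eq hS)
  set xS : Fin (k+1) → Multiset (V × V) :=
    fun i => (stepsM (W i)).filter (fun p => ¬ E p.1 p.2) with hxSdef
  set eS : Fin (k+1) → Multiset (V × V) :=
    fun i => (stepsM (W i)).filter (fun p => E p.1 p.2) with heSdef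
  have hsplit : ∀ i, eS i + xS i = stepsM (W i) := fun i => Multiset.filter_add_not _ _
  have hxU : ∀ i : Fin (k+1), ∀ p ∈ xS i, symMk p ∈ U := by
    intro i p hp
    obtain ⟨p1, p2⟩ := p
    obtain ⟨hpmem, hpnE⟩ := Multiset.mem_filter.1 hp
    have hHstep : H p1 p2 := by
      have hch := chain'_iff_stepsL.1 (hW1 i).2.2
      exact hch (p1, p2) (by exact_mod_cast hpmem)
    rcases hHstep with h | h | h
    · exact absurd h hpnE
    · exact Finset.mem_image.2 ⟨(p1, p2), h, rfl⟩
    · exact Finset.mem_image.2 ⟨(p2, p1), h, Sym2.eq_swap⟩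
  set χ : Fin (k+1) → (↥U → ZMod 2) :=
    fun i e => ((((xS i).map symMk).count ↑e : ℕ) : ZMod 2) with hχdef
  have hnotLI : ¬ LinearIndependent (ZMod 2) χ := by
    intro hLI
    have hcard := hLI.fintype_card_le_finrank
    rw [Module.finrank_pi, Fintype.card_fin, Fintype.card_coe] at hcard
    omega
  obtain ⟨g, hgsum, i₀, hgi₀⟩ := Fintype.not_linearIndependent_iff.1 hnotLI
  set K : Finset (Fin (k+1)) := Finset.univ.filter (fun i => g i ≠ 0) with hKdef
  have hKne : K.Nonempty := ⟨i₀, by simp [hKdef, hgi₀]⟩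
  have hKsum : ∀ e : Sym2 V,
      (((∑ i ∈ K, ((xS i).map symMk).count e : ℕ)) : ZMod 2) = 0 := by
    intro e
    by_cases he : e ∈ U
    · have h1 : (∑ i, g i • χ i) ⟨e, he⟩ = 0 := by rw [hgsum]; exact Pi.zero_apply _
      rw [Finset.sum_apply] at h1
      have h3 : ∀ i : Fin (k+1), (g i • χ i) ⟨e, he⟩
          = (if i ∈ K then ((((xS i).map symMk).count e : ℕ) : ZMod 2) else 0) := by
        intro i
        by_cases hiK : i ∈ K
        · have hg1 : g i = 1 := zmod2_ne_zero _ (Finset.mem_filter.1 hiK).2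
          simp only [hiK, if_true, hg1, one_smul, hχdef]
        · have hg0 : g i = 0 := by
            by_contra hne
            exact hiK (Finset.mem_filter.2 ⟨Finset.mem_univ _, hne⟩)
          simp only [hiK, if_false, hg0, zero_smul, Pi.zero_apply]
      rw [Finset.sum_congr rfl (fun i _ => h3 i), Finset.sum_ite_mem, Finset.univ_inter] at h1
      rw [Nat.cast_sum]
      exact h1
    · have hz : ∀ i ∈ K, ((xS i).map symMk).count e = 0 := by
        intro i _
        apply Multiset.count_eq_zero_of_notMem
        intro hmem
        obtain ⟨p, hp, rfl⟩ := Multiset.mem_map.1 hmem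
        exact he (hxU i p hp)
      rw [Finset.sum_eq_zero hz, Nat.cast_zero]
  set j : Fin (k+1) := K.max' hKne with hjdef
  have hjK : j ∈ K := K.max'_mem hKne
  set J : Finset (Fin (k+1)) := K.erase j with hJdef
  have hJlt : ∀ m ∈ J, (m:ℕ) < (j:ℕ) := by
    intro m hm
    have h1 : m ∈ K := Finset.mem_of_mem_erase hm
    have h2 : m ≠ j := Finset.ne_of_mem_erase hm
    have h3 : m ≤ j := K.le_max' m h1
    have h4 : m < j := lt_of_le_of_ne h3 h2
    exact h4
  have hJcard : J.card ≤ k := by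
    have h1 : J.card = K.card - 1 := Finset.card_erase_of_mem hjK
    have hK1 : K.card ≤ k + 1 := le_trans (Finset.card_filter_le _ _) (by simp)
    omega
  set Mj : Multiset (V × V) := J.val.map (fun m => ((a m).1, (a m).2)) with hMjdef
  set M : Multiset (V × V) := (∑ i ∈ K, eS i) + Mj with hMdef
  -- parity of M
  have hpar : ∀ w, degZ M w
      = (if (a j).1 = w then 1 else 0) + (if (a j).2 = w then 1 else 0) := by
    intro w
    rw [hMdef, degZ_add, degZ_sum]
    have hstepdeg : ∀ i : Fin (k+1), degZ (eS i) w
        = ((if (a i).1 = w then 1 else 0) + (if (a i).2 = w then 1 else 0))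
          + degZ (xS i) w := by
      intro i
      have h1 : degZ (eS i + xS i) w = degZ (eS i) w + degZ (xS i) w := degZ_add _ _ _
      rw [hsplit i] at h1
      have h2 := degZ_stepsM (hW1 i).1 (hW1 i).2.1 w
      calc degZ (eS i) w
          = degZ (eS i) w + (degZ (xS i) w + degZ (xS i) w) := by
            rw [zmod2_add_self, add_zero]
        _ = (degZ (eS i) w + degZ (xS i) w) + degZ (xS i) w := by ring
        _ = degZ (stepsM (W i)) w + degZ (xS i) w := by rw [← h1]
        _ = _ := by rw [h2]
    rw [Finset.sum_congr rfl (fun i _ => hstepdeg i), Finset.sum_add_distrib]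
    have hx0 : ∑ i ∈ K, degZ (xS i) w = 0 := by
      rw [← degZ_sum]
      apply degZ_eq_zero_of_even_counts
      intro e
      rw [map_finsetSum', Multiset.count_sum', Nat.cast_sum] at *
      rw [← Nat.cast_sum]
      exact hKsum e
    have hMjdeg : degZ Mj w
        = ∑ m ∈ J, ((if (a m).1 = w then 1 else 0) + (if (a m).2 = w then 1 else 0)) := by
      rw [hMjdef, degZ, Multiset.map_map]
      rfl
    rw [hx0, add_zero, hMjdeg]
    rw [← Finset.add_sum_erase K _ hjK, ← hJdef]
    rw [add_assoc, ← Finset.sum_add_distrib]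
    rw [Finset.sum_eq_zero (fun m _ => zmod2_add_self _), add_zero]
  -- extract the Euler walk
  obtain ⟨lstar, hls1, hls2, hls3⟩ := euler_walk M (a j).1 (a j).2 (hane j) hpar
  -- properties of members of M
  have hMprop : ∀ q ∈ M, E q.1 q.2 ∨ ∃ m, m ∈ J ∧ q = ((a m).1, (a m).2) := by
    intro q hq
    rw [hMdef, Multiset.mem_add] at hq
    rcases hq with hq1 | hq2
    · obtain ⟨i, hiK, hqi⟩ := Multiset.mem_sum.1 hq1
      exact Or.inl (Multiset.mem_filter.1 hqi).2
    · rw [hMjdef] at hq2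
      obtain ⟨m, hm, hqe⟩ := Multiset.mem_map.1 hq2
      exact Or.inr ⟨m, hm, hqe.symm⟩
  -- every step of lstar is an `Ei j` step and E-connected
  have hstepP : ∀ p ∈ stepsL lstar, Ei (j:ℕ) p.1 p.2 ∧ Conn E p.1 p.2 := by
    rintro ⟨p1, p2⟩ hp
    have hmem : symMk (p1, p2) ∈ (stepsM lstar).map symMk :=
      Multiset.mem_map_of_mem _ (Multiset.mem_coe.2 hp)
    have hmem2 : symMk (p1, p2) ∈ M.map symMk := Multiset.mem_of_le hls3 hmem
    obtain ⟨q, hqM, hqe⟩ := Multiset.mem_map.1 hmem2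
    obtain ⟨q1, q2⟩ := q
    have hqp : (q1 = p1 ∧ q2 = p2) ∨ (q1 = p2 ∧ q2 = p1) := Sym2.eq_iff.1 hqe
    rcases hMprop _ hqM with hEq | ⟨m, hmJ, hqm⟩
    · simp only at hEq
      rcases hqp with ⟨h1, h2⟩ | ⟨h1, h2⟩
      · subst h1; subst h2
        exact ⟨hEEi _ (by omega) _ _ hEq, Conn.of_edge hEq⟩
      · subst h1; subst h2
        exact ⟨hEEi _ (by omega) _ _ (hEsymm hEq), Conn.of_edge (hEsymm hEq)⟩
    · have hm1 : (m:ℕ) + 1 ≤ (j:ℕ) := hJlt m hmJ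
      have hq1' : q1 = (a m).1 := congrArg Prod.fst hqm
      have hq2' : q2 = (a m).2 := congrArg Prod.snd hqm
      rcases hqp with ⟨h1, h2⟩ | ⟨h1, h2⟩
      · have hp1 : p1 = (a m).1 := h1 ▸ hq1'
        have hp2 : p2 = (a m).2 := h2 ▸ hq2'
        subst hp1; subst hp2
        refine ⟨hEmono _ _ hm1 (by omega) _ _ ?_, hconn m⟩
        rw [hEsucc m]
        exact Or.inr (Or.inl rfl)
      · have hp2 : p2 = (a m).1 := h1 ▸ hq1'
        have hp1 : p1 = (a m).2 := h2 ▸ hq2'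
        subst hp1; subst hp2
        refine ⟨hEmono _ _ hm1 (by omega) _ _ ?_, (hconn m).symm' hEsymm⟩
        rw [hEsucc m]
        exact Or.inr (Or.inr rfl)
  have hstay := conn_all_steps hls1 (fun p hp => (hstepP p hp).2)
  have hwalkstar : IsWalk (Ei (j:ℕ)) (a j).1 (a j).2 lstar :=
    ⟨hls1, hls2, chain'_iff_stepsL.2 (fun p hp => (hstepP p hp).1)⟩
  have hgdle : t * dist (a j).1 (a j).2 < walkLen (dist : V → V → ℝ) lstar :=
    lt_of_lt_of_le (hgreedy j) (graphDist_le_walkLen hwalkstar)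
  -- length bound via the φ-internal part of M
  set φj : V → Prop := Conn E (a j).1 with hφjdef
  set PS : Sym2 V → Prop := Sym2.lift ⟨fun x y => φj x ∧ φj y,
    fun x y => propext (and_comm)⟩ with hPSdef
  have hPSmk : ∀ q : V × V, PS (symMk q) ↔ (φj q.1 ∧ φj q.2) := by
    rintro ⟨q1, q2⟩
    rw [hPSdef]
    exact Iff.rfl
  have hPSsteps : ∀ p ∈ stepsM lstar, PS (symMk p) := by
    intro p hp
    exact (hPSmk p).2 (hstay p (Multiset.mem_coe.1 hp))
  have hle2 := le_filter_map_of PS hls3 hPSsteps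
  set dd : V × V → ℝ := fun q => dist q.1 q.2 with hdddef
  have hddnn : ∀ q : V × V, 0 ≤ dd q := fun q => dist_nonneg
  set wt : Sym2 V → ℝ := Sym2.lift ⟨(dist : V → V → ℝ), dist_comm⟩ with hwtdef
  have hwtmk : ∀ T : Multiset (V × V), (T.map symMk).map wt = T.map dd := by
    intro T
    rw [Multiset.map_map]
    exact Multiset.map_congr rfl (fun q _ => by obtain ⟨q1, q2⟩ := q; simp [hwtdef, hdddef])
  have hlen1 := sum_map_le_of_le wt hle2 (fun e _ => sym2_dist_nonneg e)
  rw [← walkLen_eq_sym2_sum, hwtmk, hMdef, Multiset.filter_add, filter_finsetSum,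
    Multiset.map_add, Multiset.sum_add, map_finsetSum', sum_finsetSum] at hlen1
  -- hlen1 : walkLen lstar ≤ ∑ i in K, ((filter PS∘mk (eS i)).map dd).sum + ((filter PS∘mk Mj).map dd).sum
  have hwlms : ∀ i : Fin (k+1),
      walkLen (dist : V → V → ℝ) (W i) = ((stepsM (W i)).map dd).sum := by
    intro i
    rw [walkLen_eq_sum]
    simp [stepsM, hdddef, Multiset.map_coe, Multiset.sum_coe]
  have hmain : walkLen (dist : V → V → ℝ) lstar ≤
      (∑ i ∈ K, ((τ - c) * dist (a i).1 (a i).2 + 3*ε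
          + (if φj (a i).1 then 0 else c * dist (a i).1 (a i).2 + 2*ε)))
      + ∑ m ∈ J, (if φj (a m).1 then dist (a m).1 (a m).2 else 0) := by
    refine le_trans hlen1 (add_le_add (Finset.sum_le_sum ?_) ?_)
    · -- per-walk bound
      intro i _
      by_cases hcls : φj (a i).1
      · rw [if_pos hcls, add_zero]
        have hequiv : ∀ x, φj x ↔ Conn E (a i).1 x := by
          intro x
          constructor
          · intro h
            exact ((hcls.symm' hEsymm)).trans' h
          · intro h
            exact hcls.trans' h
        have hfe : Multiset.filter (fun q => PS (symMk q)) (eS i)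
            = Multiset.filter
                (fun p => E p.1 p.2 ∧ Conn E (a i).1 p.1 ∧ Conn E (a i).1 p.2)
                (stepsM (W i)) := by
          rw [heSdef]
          simp only []
          rw [Multiset.filter_filter]
          apply Multiset.filter_congr
          intro q _
          rw [hPSmk q, hequiv q.1, hequiv q.2]
          tauto
        have heq2 : ((Multiset.filter (fun q => PS (symMk q)) (eS i)).map dd).sum
            = iem E (Conn E (a i).1) (W i) := by
          rw [hfe, iem_eq_filter_sum (E := E) (Conn E (a i).1) (W i), hdddef]
        rw [heq2]
        have h1 := hP8 i
        have h2 := hW2 i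
        linarith
      · rw [if_neg hcls]
        have hle3 : Multiset.filter (fun q => PS (symMk q)) (eS i) ≤ stepsM (W i) := by
          refine le_trans (Multiset.filter_le _ _) ?_
          rw [heSdef]
          exact Multiset.filter_le _ _
        have h4 := sum_map_le_of_le dd hle3 (fun q _ => hddnn q)
        have h5 := hW2 i
        rw [hwlms i] at h5
        have := hεpos
        linarith
    · -- the a_m edges
      rw [hMjdef, Multiset.filter_map, Multiset.map_map]
      have e1 : (Multiset.filter ((fun q => PS (symMk q)) ∘ (fun m => ((a m).1, (a m).2))) J.val)
          = (J.filter (fun m => PS (symMk ((a m).1, (a m).2)))).val := by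
        rw [Finset.filter_val]
        rfl
      rw [e1]
      have e2 : ((J.filter (fun m => PS (symMk ((a m).1, (a m).2)))).val.map
            (dd ∘ (fun m => ((a m).1, (a m).2)))).sum
          = ∑ m ∈ J.filter (fun m => PS (symMk ((a m).1, (a m).2))),
              dist (a m).1 (a m).2 := rfl
      rw [e2, Finset.sum_filter]
      apply Finset.sum_le_sum
      intro m _
      by_cases hPm : PS (symMk ((a m).1, (a m).2))
      · rw [if_pos hPm, if_pos (((hPSmk _).1 hPm).1)]
      · rw [if_neg hPm]
        split
        · exact dist_nonneg
        · exact le_refl 0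
  -- final numerical contradiction
  have hdjpos : 0 < dist (a j).1 (a j).2 := hdpos j
  have hd0j : dist (a 0).1 (a 0).2 ≤ dist (a j).1 (a j).2 := hmono 0 j (Fin.zero_le j)
  have hφjj : φj (a j).1 := Conn.refl _
  have hc0 : 0 < c := by
    apply div_pos _ ht1
    nlinarith
  have hsum1 : (∑ i ∈ K, ((τ - c) * dist (a i).1 (a i).2 + 3*ε
        + (if φj (a i).1 then 0 else c * dist (a i).1 (a i).2 + 2*ε)))
      + ∑ m ∈ J, (if φj (a m).1 then dist (a m).1 (a m).2 else 0)
      ≤ ((τ - c) * dist (a j).1 (a j).2 + 3*ε)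
        + (k:ℝ) * ((τ - c + 1) * dist (a j).1 (a j).2 + 5*ε) := by
    rw [← Finset.add_sum_erase K _ hjK, ← hJdef, if_pos hφjj, add_zero,
      add_assoc, ← Finset.sum_add_distrib]
    apply add_le_add_right
    have hper : ∀ m ∈ J, ((τ - c) * dist (a m).1 (a m).2 + 3*ε
        + (if φj (a m).1 then 0 else c * dist (a m).1 (a m).2 + 2*ε)
        + (if φj (a m).1 then dist (a m).1 (a m).2 else 0))
        ≤ (τ - c + 1) * dist (a j).1 (a j).2 + 5*ε := by
      intro m hm
      have hmj : dist (a m).1 (a m).2 ≤ dist (a j).1 (a j).2 := by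
        apply hmono m j
        have := hJlt m hm
        exact le_of_lt this
      have hq1 : (τ - c) * dist (a m).1 (a m).2 ≤ (τ - c) * dist (a j).1 (a j).2 :=
        mul_le_mul_of_nonneg_left hmj hτc
      have hq2 : c * dist (a m).1 (a m).2 ≤ dist (a j).1 (a j).2 := by
        have : c * dist (a m).1 (a m).2 ≤ 1 * dist (a m).1 (a m).2 :=
          mul_le_mul_of_nonneg_right hc1 dist_nonneg
        rw [one_mul] at this
        linarith
      by_cases hφ : φj (a m).1
      · rw [if_pos hφ, if_pos hφ]
        linarith
      · rw [if_neg hφ, if_neg hφ]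
        linarith [hεpos]
    calc ∑ m ∈ J, ((τ - c) * dist (a m).1 (a m).2 + 3*ε
        + (if φj (a m).1 then 0 else c * dist (a m).1 (a m).2 + 2*ε)
        + (if φj (a m).1 then dist (a m).1 (a m).2 else 0))
        ≤ J.card • ((τ - c + 1) * dist (a j).1 (a j).2 + 5*ε) :=
          Finset.sum_le_card_nsmul _ _ _ hper
      _ = (J.card : ℝ) * ((τ - c + 1) * dist (a j).1 (a j).2 + 5*ε) :=
          nsmul_eq_mul _ _
      _ ≤ (k:ℝ) * ((τ - c + 1) * dist (a j).1 (a j).2 + 5*ε) := by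
          apply mul_le_mul_of_nonneg_right
          · exact_mod_cast hJcard
          · nlinarith [hεpos, hdjpos, hτc]
  have hfin : t * dist (a j).1 (a j).2
      < ((τ - c) * dist (a j).1 (a j).2 + 3*ε)
        + (k:ℝ) * ((τ - c + 1) * dist (a j).1 (a j).2 + 5*ε) :=
    lt_of_lt_of_le hgdle (le_trans hmain hsum1)
  have hkk : ((k:ℝ)+1) ≠ 0 := by positivity
  have hεeq : 6*((k:ℝ)+1)*ε = (((k:ℝ)+1)*c - k) * dist (a 0).1 (a 0).2 := by
    rw [hεdef]
    field_simp
  have hp1 : (((k:ℝ)+1)*τ) * dist (a j).1 (a j).2 ≤ t * dist (a j).1 (a j).2 :=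
    mul_le_mul_of_nonneg_right hcon hdjpos.le
  have hp2 : (((k:ℝ)+1)*c - k) * dist (a 0).1 (a 0).2
      ≤ (((k:ℝ)+1)*c - k) * dist (a j).1 (a j).2 :=
    mul_le_mul_of_nonneg_left hd0j hmarg.le
  have hk0 : (0:ℝ) ≤ (k:ℝ) := Nat.cast_nonneg k
  have s1 : (((k:ℝ)+1)*c - k) * dist (a j).1 (a j).2 < (5*(k:ℝ)+3)*ε := by
    nlinarith [hfin, hp1]
  nlinarith [s1, hp2, hεeq, hεpos, hk0]
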